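/- For every x ∈ (0, 1), x·log((1+x)/(1-x)) - log(1-x²) ≤ x²·(18 - 11x²)/(6·(1 - x²)). -/

import Mathlib

open Real Set

private noncomputable def Fb : ℝ → ℝ :=
  fun t => t*(6-4*t^2)/(3*(1-t^2)) - (Real.log (1+t) - Real.log (1-t))

private noncomputable def Gb : ℝ → ℝ :=
  fun t => t^2*(2-t^2)/(2*(1-t^2)) + (Real.log (1+t) + Real.log (1-t))

private lemma Fb_deriv {t : ℝ} (h0 : 0 < t) (h1 : t < 1) :
    HasDerivAt Fb (4*t^4/(3*(1-t^2)^2)) t := by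
  have h1t : (1:ℝ) - t^2 ≠ 0 := by nlinarith
  have hp : (1:ℝ) + t ≠ 0 := by linarith
  have hm : (1:ℝ) - t ≠ 0 := by linarith
  have hnum : HasDerivAt (fun t:ℝ => t*(6-4*t^2)) (6 - 12*t^2) t := by
    have := (hasDerivAt_id t).mul (((hasDerivAt_pow 2 t).const_mul (4:ℝ)).const_sub 6)
    refine this.congr_deriv ?_
    simp only [id_eq]
    ring
  have hden : HasDerivAt (fun t:ℝ => 3*(1-t^2)) (-6*t) t := by
    have := ((hasDerivAt_pow 2 t).const_sub 1).const_mul (3:ℝ)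
    refine this.congr_deriv ?_
    ring
  have hden' : (3:ℝ)*(1-t^2) ≠ 0 := by simpa using h1t
  have hrat := hnum.div hden hden'
  have hlp : HasDerivAt (fun t:ℝ => Real.log (1+t)) (1/(1+t)) t := by
    have := (HasDerivAt.log ((hasDerivAt_id t).const_add 1) hp)
    simpa using this
  have hlm : HasDerivAt (fun t:ℝ => Real.log (1-t)) (-(1/(1-t))) t := by
    have := (HasDerivAt.log ((hasDerivAt_id t).const_sub 1) hm)
    refine this.congr_deriv ?_
    simp only [id_eq]
    field_simp
  have := hrat.sub (hlp.sub hlm)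
  refine this.congr_deriv ?_
  field_simp
  ring

private lemma Gb_deriv {t : ℝ} (h0 : 0 < t) (h1 : t < 1) :
    HasDerivAt Gb (t^5/(1-t^2)^2) t := by
  have h1t : (1:ℝ) - t^2 ≠ 0 := by nlinarith
  have hp : (1:ℝ) + t ≠ 0 := by linarith
  have hm : (1:ℝ) - t ≠ 0 := by linarith
  have hnum : HasDerivAt (fun t:ℝ => t^2*(2-t^2)) (4*t - 4*t^3) t := by
    have := (hasDerivAt_pow 2 t).mul ((hasDerivAt_pow 2 t).const_sub 2)
    refine this.congr_deriv ?_
    ring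
  have hden : HasDerivAt (fun t:ℝ => 2*(1-t^2)) (-4*t) t := by
    have := ((hasDerivAt_pow 2 t).const_sub 1).const_mul (2:ℝ)
    refine this.congr_deriv ?_
    ring
  have hden' : (2:ℝ)*(1-t^2) ≠ 0 := by simpa using h1t
  have hrat := hnum.div hden hden'
  have hlp : HasDerivAt (fun t:ℝ => Real.log (1+t)) (1/(1+t)) t := by
    have := (HasDerivAt.log ((hasDerivAt_id t).const_add 1) hp)
    simpa using this
  have hlm : HasDerivAt (fun t:ℝ => Real.log (1-t)) (-(1/(1-t))) t := by
    have := (HasDerivAt.log ((hasDerivAt_id t).const_sub 1) hm)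
    refine this.congr_deriv ?_
    simp only [id_eq]
    field_simp
  have := hrat.add (hlp.add hlm)
  refine this.congr_deriv ?_
  field_simp
  ring

private lemma contFacts : ContinuousOn Fb (Ico (0:ℝ) 1) ∧ ContinuousOn Gb (Ico (0:ℝ) 1) := by
  have h1 : ∀ t ∈ Ico (0:ℝ) 1, (3:ℝ)*(1-t^2) ≠ 0 := by
    intro t ht; obtain ⟨h0, h1⟩ := ht; nlinarith
  have h2 : ∀ t ∈ Ico (0:ℝ) 1, (2:ℝ)*(1-t^2) ≠ 0 := by
    intro t ht; obtain ⟨h0, h1⟩ := ht; nlinarith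
  have hp : ∀ t ∈ Ico (0:ℝ) 1, (1:ℝ)+t ≠ 0 := by
    intro t ht; obtain ⟨h0, h1⟩ := ht; linarith
  have hm : ∀ t ∈ Ico (0:ℝ) 1, (1:ℝ)-t ≠ 0 := by
    intro t ht; obtain ⟨h0, h1⟩ := ht; linarith
  have clp : ContinuousOn (fun t:ℝ => Real.log (1+t)) (Ico (0:ℝ) 1) :=
    ContinuousOn.log (by fun_prop) hp
  have clm : ContinuousOn (fun t:ℝ => Real.log (1-t)) (Ico (0:ℝ) 1) :=
    ContinuousOn.log (by fun_prop) hm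
  constructor
  · exact (ContinuousOn.div (by fun_prop) (by fun_prop) h1).sub (clp.sub clm)
  · exact (ContinuousOn.div (by fun_prop) (by fun_prop) h2).add (clp.add clm)

private lemma Fb_nonneg {x : ℝ} (h0 : 0 < x) (h1 : x < 1) : 0 ≤ Fb x := by
  have hmono : MonotoneOn Fb (Ico (0:ℝ) 1) := by
    apply monotoneOn_of_deriv_nonneg (convex_Ico 0 1) contFacts.1
    · intro t ht
      rw [interior_Ico] at ht
      exact (Fb_deriv ht.1 ht.2).differentiableAt.differentiableWithinAt
    · intro t ht
      rw [interior_Ico] at ht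
      rw [(Fb_deriv ht.1 ht.2).deriv]
      have : (0:ℝ) < 1 - t^2 := by nlinarith [ht.1, ht.2]
      positivity
  have h := hmono (by constructor <;> norm_num) ⟨le_of_lt h0, h1⟩ (le_of_lt h0)
  have hF0 : Fb 0 = 0 := by simp [Fb]
  linarith [h, hF0.le, hF0.ge]

private lemma Gb_nonneg {x : ℝ} (h0 : 0 < x) (h1 : x < 1) : 0 ≤ Gb x := by
  have hmono : MonotoneOn Gb (Ico (0:ℝ) 1) := by
    apply monotoneOn_of_deriv_nonneg (convex_Ico 0 1) contFacts.2
    · intro t ht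
      rw [interior_Ico] at ht
      exact (Gb_deriv ht.1 ht.2).differentiableAt.differentiableWithinAt
    · intro t ht
      rw [interior_Ico] at ht
      rw [(Gb_deriv ht.1 ht.2).deriv]
      exact div_nonneg (pow_nonneg ht.1.le 5) (by positivity)
  have h := hmono (by constructor <;> norm_num) ⟨le_of_lt h0, h1⟩ (le_of_lt h0)
  have hG0 : Gb 0 = 0 := by simp [Gb]
  linarith [h, hG0.le, hG0.ge]

/-- For every x ∈ (0, 1),
x·log((1+x)/(1-x)) - log(1-x²) ≤ x²·(18 - 11x²)/(6·(1 - x²)). -/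
theorem stmt_4 :
    ∀ x ∈ Ioo (0 : ℝ) 1,
      x * Real.log ((1 + x) / (1 - x)) - Real.log (1 - x ^ 2)
        ≤ x ^ 2 * (18 - 11 * x ^ 2) / (6 * (1 - x ^ 2)) := by
  intro x hx
  obtain ⟨h0, h1⟩ := hx
  have hp : (0:ℝ) < 1 + x := by linarith
  have hm : (0:ℝ) < 1 - x := by linarith
  have hsq : (1:ℝ) - x^2 = (1+x)*(1-x) := by ring
  have hx2 : (0:ℝ) < 1 - x^2 := by nlinarith
  have hlogdiv : Real.log ((1+x)/(1-x)) = Real.log (1+x) - Real.log (1-x) :=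
    Real.log_div hp.ne' hm.ne'
  have hlogmul : Real.log (1 - x^2) = Real.log (1+x) + Real.log (1-x) := by
    rw [hsq, Real.log_mul hp.ne' hm.ne']
  rw [hlogdiv, hlogmul]
  have hF := Fb_nonneg h0 h1
  have hG := Gb_nonneg h0 h1
  simp only [Fb, Gb] at hF hG
  have hkey1 : Real.log (1+x) - Real.log (1-x) ≤ x*(6-4*x^2)/(3*(1-x^2)) := by linarith
  have hkey2 : -(Real.log (1+x) + Real.log (1-x)) ≤ x^2*(2-x^2)/(2*(1-x^2)) := by linarith
  have hmul : x * (Real.log (1+x) - Real.log (1-x)) ≤ x * (x*(6-4*x^2)/(3*(1-x^2))) :=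
    mul_le_mul_of_nonneg_left hkey1 h0.le
  have hfin : x * (x*(6-4*x^2)/(3*(1-x^2))) + x^2*(2-x^2)/(2*(1-x^2))
      = x ^ 2 * (18 - 11 * x ^ 2) / (6 * (1 - x ^ 2)) := by
    field_simp
    ring
  linarith
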